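/- If B⁽¹⁾,…,B⁽ᵏ⁾ are Bourgain systems on a finite abelian group G of dimensions d₁,…,d_k, then their pointwise intersection (⋂ᵢ B⁽ⁱ⁾_ρ)_ρ is a Bourgain system of dimension at most 2(d₁+⋯+d_k) and density at least 4^{−(d₁+⋯+d_{k−1})} 2^{−d_k} ∏ᵢ μ_G(B⁽ⁱ⁾). -/

import Mathlib

open Finset Pointwise

/-- A Bourgain system of dimension `d` on a finite abelian group `G`: a family
`(B ρ)_{ρ ∈ (0,2]}` of subsets satisfying nesting, containing `0`, symmetry, addition and
`2^d`-doubling. -/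
def IsBourgainSystem {G : Type*} [AddCommGroup G] [Fintype G] (B : ℝ → Finset G) (d : ℝ) :
    Prop :=
  (∀ ρ ρ' : ℝ, 0 < ρ' → ρ' ≤ ρ → ρ ≤ 2 → B ρ' ⊆ B ρ) ∧
  (∀ ρ : ℝ, 0 < ρ → ρ ≤ 2 → (0 : G) ∈ B ρ) ∧
  (∀ ρ : ℝ, 0 < ρ → ρ ≤ 2 → ∀ x ∈ B ρ, -x ∈ B ρ) ∧
  (∀ ρ ρ' : ℝ, 0 < ρ → 0 < ρ' → ρ + ρ' ≤ 1 →
    ∀ x ∈ B ρ, ∀ y ∈ B ρ', x + y ∈ B (ρ + ρ')) ∧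
  (∀ ρ : ℝ, 0 < ρ → ρ ≤ 1 → ∃ X : Finset G, (X.card : ℝ) ≤ (2 : ℝ) ^ d ∧
    ∀ y ∈ B (2 * ρ), ∃ x ∈ X, y - x ∈ B ρ)

/-- The density `μ_G(B) = μ_G(B₁)` of a Bourgain system. -/
noncomputable def bsDensity {G : Type*} [AddCommGroup G] [Fintype G] (B : ℝ → Finset G) : ℝ :=
  ((B 1).card : ℝ) / (Fintype.card G : ℝ)

/-- A Bourgain system of dimension `d` is regular if
`1 - 8d|η| ≤ μ_G(B₁)/μ_G(B_{1+η}) ≤ 1 + 8d|η|` whenever `d|η| ≤ 1/8`. -/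
def IsRegularBS {G : Type*} [AddCommGroup G] [Fintype G] (B : ℝ → Finset G) (d : ℝ) : Prop :=
  ∀ η : ℝ, d * |η| ≤ 1 / 8 →
    1 - 8 * d * |η| ≤ ((B 1).card : ℝ) / ((B (1 + η)).card : ℝ) ∧
    ((B 1).card : ℝ) / ((B (1 + η)).card : ℝ) ≤ 1 + 8 * d * |η|

private lemma two_rpow_sum {ι : Type*} (s : Finset ι) (f : ι → ℝ) :
    (2:ℝ) ^ (∑ i ∈ s, f i) = ∏ i ∈ s, (2:ℝ) ^ (f i) := by
  classical
  induction s using Finset.induction_on with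
  | empty => simp
  | @insert a s h ih =>
      rw [Finset.sum_insert h, Finset.prod_insert h, Real.rpow_add (by norm_num), ih]

/-- The intersection of Bourgain systems `B⁽⁰⁾,…,B⁽ᵏ⁾` of dimensions `d₀,…,d_k` is a Bourgain
system of dimension at most `2(d₀ + ⋯ + d_k)` and density at least
`4^{-(d₀+⋯+d_{k-1})} 2^{-d_k} ∏ᵢ μ_G(B⁽ⁱ⁾)`. -/
theorem stmt6 {G : Type*} [AddCommGroup G] [Fintype G] [DecidableEq G] (k : ℕ)
    (B : Fin (k + 1) → ℝ → Finset G) (d : Fin (k + 1) → ℝ)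
    (hd : ∀ i, 1 ≤ d i) (hB : ∀ i, IsBourgainSystem (B i) (d i)) :
    IsBourgainSystem (fun ρ => Finset.univ.inf fun i => B i ρ) (2 * ∑ i, d i) ∧
      (4 : ℝ) ^ (-(∑ i : Fin k, d i.castSucc)) * (2 : ℝ) ^ (-(d (Fin.last k))) *
          ∏ i, bsDensity (B i)
        ≤ bsDensity (fun ρ => Finset.univ.inf fun i => B i ρ) := by
  classical
  obtain hnest := fun i => (hB i).1
  obtain hzero := fun i => (hB i).2.1
  obtain hsymm := fun i => (hB i).2.2.1
  obtain hadd := fun i => (hB i).2.2.2.1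
  obtain hdbl := fun i => (hB i).2.2.2.2
  have hmem : ∀ (ρ : ℝ) (x : G), x ∈ (Finset.univ.inf fun i => B i ρ) ↔ ∀ i, x ∈ B i ρ := by
    intro ρ x; simp [Finset.mem_inf]
  have hdpos : ∀ i, (0:ℝ) < d i := fun i => lt_of_lt_of_le one_pos (hd i)
  -- the key covering lemma: cover `B i (2ρ)` by at most `2^(2 d i)` translates of `B i (ρ/2)`
  have cover2 : ∀ (i : Fin (k+1)) (ρ : ℝ), 0 < ρ → ρ ≤ 1 →
      ∃ X : Finset G, (X.card : ℝ) ≤ (2:ℝ) ^ (2 * d i) ∧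
        ∀ y ∈ B i (2 * ρ), ∃ x ∈ X, y - x ∈ B i (ρ / 2) := by
    intro i ρ hρ0 hρ1
    obtain ⟨X₁, hX₁c, hX₁⟩ := hdbl i ρ hρ0 hρ1
    obtain ⟨X₂, hX₂c, hX₂⟩ := hdbl i (ρ/2) (by linarith) (by linarith)
    refine ⟨X₁ + X₂, ?_, ?_⟩
    · calc ((X₁ + X₂).card : ℝ) ≤ (X₁.card : ℝ) * X₂.card := by
            exact_mod_cast Finset.card_add_le
        _ ≤ (2:ℝ) ^ (d i) * (2:ℝ) ^ (d i) := by
            apply mul_le_mul hX₁c hX₂c (by positivity) (by positivity)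
        _ = (2:ℝ) ^ (2 * d i) := by
            rw [← Real.rpow_add (by norm_num)]; ring_nf
    · intro y hy
      obtain ⟨x₁, hx₁, hyx₁⟩ := hX₁ y hy
      have : y - x₁ ∈ B i (2 * (ρ/2)) := by rwa [show 2 * (ρ/2) = ρ by ring]
      obtain ⟨x₂, hx₂, hyx₂⟩ := hX₂ (y - x₁) this
      exact ⟨x₁ + x₂, Finset.add_mem_add hx₁ hx₂, by rwa [sub_add_eq_sub_sub]⟩
  constructor
  · -- the intersection is a Bourgain system of dimension `2 ∑ d i`
    refine ⟨?_, ?_, ?_, ?_, ?_⟩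
    · intro ρ ρ' h1 h2 h3 x hx
      rw [hmem] at hx ⊢
      exact fun i => hnest i ρ ρ' h1 h2 h3 (hx i)
    · intro ρ h1 h2; rw [hmem]; exact fun i => hzero i ρ h1 h2
    · intro ρ h1 h2 x hx; rw [hmem] at hx ⊢
      exact fun i => hsymm i ρ h1 h2 x (hx i)
    · intro ρ ρ' h1 h2 h3 x hx y hy; rw [hmem] at hx hy ⊢
      exact fun i => hadd i ρ ρ' h1 h2 h3 x (hx i) y (hy i)
    · intro ρ hρ0 hρ1
      choose X hXc hX using fun i => cover2 i ρ hρ0 hρ1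
      set P : (Fin (k+1) → G) → Prop :=
        fun t => ∃ y : G, (∀ i, y ∈ B i (2*ρ)) ∧ ∀ i, y - t i ∈ B i (ρ/2) with hP
      set f : (Fin (k+1) → G) → G := fun t => if h : P t then h.choose else 0 with hf
      refine ⟨(Fintype.piFinset X).image f, ?_, ?_⟩
      · calc ((Fintype.piFinset X).image f).card ≤ ((Fintype.piFinset X).card : ℝ) := by
              exact_mod_cast Finset.card_image_le
          _ = ∏ i, ((X i).card : ℝ) := by rw [Fintype.card_piFinset]; push_cast; rfl
          _ ≤ ∏ i, (2:ℝ) ^ (2 * d i) :=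
              Finset.prod_le_prod (fun i _ => by positivity) (fun i _ => hXc i)
          _ = (2:ℝ) ^ (2 * ∑ i, d i) := by
              rw [← two_rpow_sum, ← Finset.mul_sum]
      · intro y hy
        rw [hmem] at hy
        have := fun i => hX i y (hy i)
        choose t ht hyt using this
        have hPt : P t := ⟨y, hy, hyt⟩
        refine ⟨f t, Finset.mem_image_of_mem f (by rw [Fintype.mem_piFinset]; exact ht), ?_⟩
        rw [hmem]
        intro i
        rw [hf]
        simp only [dif_pos hPt]
        obtain ⟨hz1, hz2⟩ := hPt.choose_spec
        have h1 : y - t i ∈ B i (ρ/2) := hyt i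
        have h2 : -(hPt.choose - t i) ∈ B i (ρ/2) :=
          hsymm i (ρ/2) (by linarith) (by linarith) _ (hz2 i)
        have := hadd i (ρ/2) (ρ/2) (by linarith) (by linarith) (by linarith)
          _ h1 _ h2
        rw [show ρ/2 + ρ/2 = ρ by ring] at this
        convert this using 1
        abel
  · -- density bound
    set A : Fin (k+1) → Finset G := fun i => B i (1/2) with hA
    have hcov : ∀ i, ((B i 1).card : ℝ) ≤ (2:ℝ) ^ (d i) * ((A i).card : ℝ) := by
      intro i
      obtain ⟨X, hXc, hX⟩ := hdbl i (1/2) (by norm_num) (by norm_num)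
      rw [show (2:ℝ) * (1/2) = 1 by norm_num] at hX
      have hsub : B i 1 ⊆ X.biUnion fun x => (A i).image (x + ·) := by
        intro y hy
        obtain ⟨x, hx, hyx⟩ := hX y hy
        exact Finset.mem_biUnion.2 ⟨x, hx, Finset.mem_image.2 ⟨y - x, hyx, by abel⟩⟩
      calc ((B i 1).card : ℝ) ≤ ((X.biUnion fun x => (A i).image (x + ·)).card : ℝ) := by
            exact_mod_cast Finset.card_le_card hsub
        _ ≤ (X.card : ℝ) * ((A i).card : ℝ) := by
            have := Finset.card_biUnion_le (s := X) (t := fun x => (A i).image (x + ·))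
            have h2 : ∑ x ∈ X, ((A i).image (x + ·)).card ≤ X.card * (A i).card := by
              calc ∑ x ∈ X, ((A i).image (x + ·)).card ≤ ∑ _x ∈ X, (A i).card :=
                    Finset.sum_le_sum fun x _ => Finset.card_image_le
                _ = X.card * (A i).card := by rw [Finset.sum_const, smul_eq_mul]
            exact_mod_cast le_trans this h2
        _ ≤ (2:ℝ) ^ (d i) * ((A i).card : ℝ) :=
            mul_le_mul_of_nonneg_right hXc (by positivity)
    set N : (Fin (k+1) → G) → ℕ :=
      fun t => (univ.filter fun x : G => ∀ i, x - t i ∈ A i).card with hN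
    have hsum : ∑ t : Fin (k+1) → G, N t = Fintype.card G * ∏ i, (A i).card := by
      have : ∀ t : Fin (k+1) → G,
          N t = ∑ x : G, ∏ i, (if x - t i ∈ A i then (1:ℕ) else 0) := by
        intro t
        simp only [hN]
        rw [Finset.card_filter]
        refine Finset.sum_congr rfl fun x _ => ?_
        rw [Finset.prod_boole]
        simp
      simp only [this]
      rw [Finset.sum_comm]
      have inner : ∀ x : G,
          ∑ t : Fin (k+1) → G, ∏ i, (if x - t i ∈ A i then (1:ℕ) else 0)
            = ∏ i, (A i).card := by
        intro x
        have h1 : ∑ t ∈ Fintype.piFinset (fun _ : Fin (k+1) => (univ : Finset G)),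
            ∏ i, (if x - t i ∈ A i then (1:ℕ) else 0)
            = ∏ i, ∑ s : G, (if x - s ∈ A i then (1:ℕ) else 0) :=
          (Finset.prod_univ_sum (fun _ : Fin (k+1) => (univ : Finset G))
            (fun i s => if x - s ∈ A i then (1:ℕ) else 0)).symm
        rw [Fintype.piFinset_univ] at h1
        rw [h1]
        refine Finset.prod_congr rfl fun i _ => ?_
        rw [← Finset.card_filter]
        rw [show (univ.filter fun s : G => x - s ∈ A i) = (A i).image (fun a => x - a) by
          ext s
          simp only [Finset.mem_filter, Finset.mem_univ, true_and, Finset.mem_image]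
          constructor
          · intro h; exact ⟨x - s, h, by abel⟩
          · rintro ⟨a, ha, rfl⟩; simpa using ha]
        exact Finset.card_image_of_injective _ (sub_right_injective)
      simp only [inner]
      rw [Finset.sum_const, Finset.card_univ, smul_eq_mul]
    -- pick a good translate
    have hGpos : 0 < Fintype.card G := Fintype.card_pos
    obtain ⟨t, -, ht⟩ : ∃ t ∈ (univ : Finset (Fin (k+1) → G)),
        ∏ i, (A i).card ≤ Fintype.card G ^ k * N t := by
      refine Finset.exists_le_of_sum_le Finset.univ_nonempty (le_of_eq ?_)
      calc ∑ _t : Fin (k+1) → G, ∏ i, (A i).card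
          = Fintype.card G ^ (k+1) * ∏ i, (A i).card := by
            rw [Finset.sum_const, Finset.card_univ, smul_eq_mul, Fintype.card_fun,
              Fintype.card_fin]
        _ = Fintype.card G ^ k * (Fintype.card G * ∏ i, (A i).card) := by ring
        _ = Fintype.card G ^ k * ∑ t : Fin (k+1) → G, N t := by rw [hsum]
        _ = ∑ t : Fin (k+1) → G, Fintype.card G ^ k * N t := by rw [Finset.mul_sum]
    -- N t ≤ card of the intersection at 1
    have hNle : N t ≤ (Finset.univ.inf fun i => B i (1:ℝ)).card := by
      rcases Finset.eq_empty_or_nonempty (univ.filter fun x : G => ∀ i, x - t i ∈ A i) with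
        he | ⟨y₀, hy₀⟩
      · rw [hN]; simp only; rw [he]; simp
      · rw [Finset.mem_filter] at hy₀
        apply Finset.card_le_card_of_injOn (fun y => y - y₀)
        · intro y hy
          rw [Finset.mem_coe, Finset.mem_filter] at hy
          rw [Finset.mem_coe, hmem]
          intro i
          have h1 : y - t i ∈ B i (1/2) := hy.2 i
          have h2 : -(y₀ - t i) ∈ B i (1/2) :=
            hsymm i (1/2) (by norm_num) (by norm_num) _ (hy₀.2 i)
          have := hadd i (1/2) (1/2) (by norm_num) (by norm_num) (by norm_num) _ h1 _ h2
          rw [show (1:ℝ)/2 + 1/2 = 1 by norm_num] at this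
          convert this using 1
          abel
        · exact fun a _ b _ h => by simpa using sub_left_injective h
    -- now the real-number chain
    have hkey : (2:ℝ) ^ (-(∑ i, d i)) * ∏ i, ((B i 1).card : ℝ)
        ≤ (Fintype.card G : ℝ) ^ k * ((Finset.univ.inf fun i => B i (1:ℝ)).card : ℝ) := by
      have h1 : ∏ i, ((B i 1).card : ℝ) ≤ (2:ℝ) ^ (∑ i, d i) * ∏ i, ((A i).card : ℝ) := by
        calc ∏ i, ((B i 1).card : ℝ) ≤ ∏ i, ((2:ℝ) ^ (d i) * ((A i).card : ℝ)) :=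
              Finset.prod_le_prod (fun i _ => by positivity) (fun i _ => hcov i)
          _ = (2:ℝ) ^ (∑ i, d i) * ∏ i, ((A i).card : ℝ) := by
              rw [Finset.prod_mul_distrib, two_rpow_sum]
      have h2 : (∏ i, ((A i).card : ℝ))
          ≤ (Fintype.card G : ℝ) ^ k * ((Finset.univ.inf fun i => B i (1:ℝ)).card : ℝ) := by
        have := le_trans ht (Nat.mul_le_mul_left _ hNle)
        exact_mod_cast this
      calc (2:ℝ) ^ (-(∑ i, d i)) * ∏ i, ((B i 1).card : ℝ)
          ≤ (2:ℝ) ^ (-(∑ i, d i)) * ((2:ℝ) ^ (∑ i, d i) * ∏ i, ((A i).card : ℝ)) :=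
            mul_le_mul_of_nonneg_left h1 (by positivity)
        _ = ∏ i, ((A i).card : ℝ) := by
            rw [← mul_assoc, ← Real.rpow_add (by norm_num)]; simp
        _ ≤ _ := h2
    have hconst : (4 : ℝ) ^ (-(∑ i : Fin k, d i.castSucc)) * (2 : ℝ) ^ (-(d (Fin.last k)))
        ≤ (2:ℝ) ^ (-(∑ i, d i)) := by
      have hs0 : (0:ℝ) ≤ ∑ i : Fin k, d i.castSucc :=
        Finset.sum_nonneg fun i _ => le_of_lt (hdpos _)
      have h4 : (4 : ℝ) ^ (-(∑ i : Fin k, d i.castSucc))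
          ≤ (2:ℝ) ^ (-(∑ i : Fin k, d i.castSucc)) := by
        rw [show (4:ℝ) = (2:ℝ) ^ (2:ℝ) by
            rw [show ((2:ℝ):ℝ) = ((2:ℕ):ℝ) by norm_num, Real.rpow_natCast]; norm_num,
          ← Real.rpow_mul (by norm_num)]
        apply Real.rpow_le_rpow_of_exponent_le one_le_two
        linarith
      calc (4 : ℝ) ^ (-(∑ i : Fin k, d i.castSucc)) * (2 : ℝ) ^ (-(d (Fin.last k)))
          ≤ (2:ℝ) ^ (-(∑ i : Fin k, d i.castSucc)) * (2 : ℝ) ^ (-(d (Fin.last k))) :=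
            mul_le_mul_of_nonneg_right h4 (by positivity)
        _ = (2:ℝ) ^ (-(∑ i, d i)) := by
            rw [← Real.rpow_add (by norm_num), Fin.sum_univ_castSucc]
            ring_nf
    -- assemble
    unfold bsDensity
    have hGpos' : (0:ℝ) < (Fintype.card G : ℝ) := by exact_mod_cast hGpos
    have hprod : ∏ i, (((B i 1).card : ℝ) / (Fintype.card G : ℝ))
        = (∏ i, ((B i 1).card : ℝ)) / (Fintype.card G : ℝ) ^ (k+1) := by
      rw [Finset.prod_div_distrib, Finset.prod_const, Finset.card_univ, Fintype.card_fin]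
    rw [hprod]
    have hbnn : (0:ℝ) ≤ (∏ i, ((B i 1).card : ℝ)) / (Fintype.card G : ℝ) ^ (k+1) :=
      div_nonneg (Finset.prod_nonneg fun i _ => Nat.cast_nonneg _)
        (pow_nonneg (Nat.cast_nonneg _) _)
    calc (4 : ℝ) ^ (-(∑ i : Fin k, d i.castSucc)) * (2 : ℝ) ^ (-(d (Fin.last k))) *
          ((∏ i, ((B i 1).card : ℝ)) / (Fintype.card G : ℝ) ^ (k+1))
        ≤ (2:ℝ) ^ (-(∑ i, d i)) *
          ((∏ i, ((B i 1).card : ℝ)) / (Fintype.card G : ℝ) ^ (k+1)) :=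
          mul_le_mul_of_nonneg_right hconst hbnn
      _ = ((2:ℝ) ^ (-(∑ i, d i)) * ∏ i, ((B i 1).card : ℝ)) / (Fintype.card G : ℝ) ^ (k+1) := by
          ring
      _ ≤ ((Fintype.card G : ℝ) ^ k * ((Finset.univ.inf fun i => B i (1:ℝ)).card : ℝ))
            / (Fintype.card G : ℝ) ^ (k+1) :=
          div_le_div_of_nonneg_right hkey (by positivity)
      _ = ((Finset.univ.inf fun i => B i (1:ℝ)).card : ℝ) / (Fintype.card G : ℝ) := by
          rw [pow_succ]
          field_simp
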